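/- If Λ is separating and T preserves weak pullbacks, then every difunctional Λ-bisimulation between T-coalgebras is a T-bisimulation. -/

import Mathlib

open CategoryTheory

universe u

/-- A monotone predicate lifting for a `Set`-endofunctor `T`:
a natural transformation `Q → Q ∘ T^op` whose components are monotone. -/
structure PredLifting (T : Type u ⥤ Type u) where
  app : ∀ X : Type u, Set X → Set (T.obj X)
  natural : ∀ {X Y : Type u} (f : X → Y) (A : Set Y),
    app X (f ⁻¹' A) = T.map (TypeCat.ofHom f) ⁻¹' app Y A
  mono : ∀ (X : Type u) ⦃A B : Set X⦄, A ⊆ B → app X A ⊆ app X B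

/-- Relational image `S[A]`. -/
def RelImage {X Y : Type u} (S : X → Y → Prop) (A : Set X) : Set Y :=
  {y | ∃ x ∈ A, S x y}

/-- `S` is a `Λ`-simulation from the `T`-coalgebra `(X,ξ)` to `(Y,ζ)`. -/
def IsSim {T : Type u ⥤ Type u} (Λ : Set (PredLifting T))
    {X Y : Type u} (ξ : X → T.obj X) (ζ : Y → T.obj Y)
    (S : X → Y → Prop) : Prop :=
  ∀ x y, S x y → ∀ L ∈ Λ, ∀ A : Set X,
    ξ x ∈ L.app X A → ζ y ∈ L.app Y (RelImage S A)

/-- `S` is a `T`-bisimulation: it carries a coalgebra structure making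
both projections coalgebra morphisms. -/
def IsTBisim (T : Type u ⥤ Type u) {X Y : Type u}
    (ξ : X → T.obj X) (ζ : Y → T.obj Y) (S : X → Y → Prop) : Prop :=
  ∃ ρ : {p : X × Y // S p.1 p.2} → T.obj {p : X × Y // S p.1 p.2},
    (∀ s, T.map (TypeCat.ofHom fun q : {p : X × Y // S p.1 p.2} => q.1.1) (ρ s) = ξ s.1.1) ∧
    (∀ s, T.map (TypeCat.ofHom fun q : {p : X × Y // S p.1 p.2} => q.1.2) (ρ s) = ζ s.1.2)

/-- `Λ` is separating. -/
def Separating {T : Type u ⥤ Type u} (Λ : Set (PredLifting T)) : Prop :=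
  ∀ (X : Type u) (t t' : T.obj X),
    (∀ L ∈ Λ, ∀ A : Set X, t ∈ L.app X A ↔ t' ∈ L.app X A) → t = t'

/-- `T` preserves weak pullbacks (of sets, in the usual concrete sense). -/
def PreservesWeakPullbacks (T : Type u ⥤ Type u) : Prop :=
  ∀ {X Y Z : Type u} (f : X → Z) (g : Y → Z)
    (u : T.obj X) (v : T.obj Y), T.map (TypeCat.ofHom f) u = T.map (TypeCat.ofHom g) v →
      ∃ w : T.obj {p : X × Y // f p.1 = g p.2},
        T.map (TypeCat.ofHom fun p : {p : X × Y // f p.1 = g p.2} => p.1.1) w = u ∧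
        T.map (TypeCat.ofHom fun p : {p : X × Y // f p.1 = g p.2} => p.1.2) w = v

/-- A relation is difunctional. -/
def Difunctional {X Y : Type u} (S : X → Y → Prop) : Prop :=
  ∀ x y z w, S x y → S z y → S z w → S x w

/-- Auxiliary: the relation on `X ⊕ Y` glueing along `S`. -/
def DifRel {X Y : Type u} (S : X → Y → Prop) : (X ⊕ Y) → (X ⊕ Y) → Prop
  | .inl x, .inl x' => x = x' ∨ ∃ y, S x y ∧ S x' y
  | .inl x, .inr y => S x y
  | .inr y, .inl x => S x y
  | .inr y, .inr y' => y = y' ∨ ∃ x, S x y ∧ S x y'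

theorem difRel_equiv {X Y : Type u} {S : X → Y → Prop} (hdif : Difunctional S) :
    Equivalence (DifRel S) := by
  constructor
  · rintro (x | y) <;> exact Or.inl rfl
  · rintro (x | y) (x' | y') h
    · rcases h with h | ⟨y, h1, h2⟩
      · exact Or.inl h.symm
      · exact Or.inr ⟨y, h2, h1⟩
    · exact h
    · exact h
    · rcases h with h | ⟨x, h1, h2⟩
      · exact Or.inl h.symm
      · exact Or.inr ⟨x, h2, h1⟩
  · rintro (x | y) (x' | y') (x'' | y'') hab hbc
    · rcases hab with rfl | ⟨y, h1, h2⟩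
      · exact hbc
      · rcases hbc with rfl | ⟨y', h3, h4⟩
        · exact Or.inr ⟨y, h1, h2⟩
        · exact Or.inr ⟨y', hdif x y x' y' h1 h2 h3, h4⟩
    · rcases hab with rfl | ⟨y, h1, h2⟩
      · exact hbc
      · exact hdif x y x' y'' h1 h2 hbc
    · exact Or.inr ⟨y', hab, hbc⟩
    · rcases hbc with rfl | ⟨x₀, h3, h4⟩
      · exact hab
      · exact hdif x y' x₀ y'' hab h3 h4
    · rcases hbc with rfl | ⟨y₀, h3, h4⟩
      · exact hab
      · exact hdif x'' y₀ x' y h4 h3 hab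
    · exact Or.inr ⟨x', hab, hbc⟩
    · rcases hab with rfl | ⟨x, h1, h2⟩
      · exact hbc
      · exact hdif x'' y' x y hbc h2 h1
    · rcases hab with rfl | ⟨x, h1, h2⟩
      · exact hbc
      · rcases hbc with rfl | ⟨x', h3, h4⟩
        · exact Or.inr ⟨x, h1, h2⟩
        · exact Or.inr ⟨x', hdif x' y' x y h3 h2 h1, h4⟩

theorem difunctional_lambda_bisim_is_t_bisim {T : Type u ⥤ Type u}
    {Λ : Set (PredLifting T)} (hsep : Separating Λ)
    (hwp : PreservesWeakPullbacks T) {X Y : Type u}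
    (ξ : X → T.obj X) (ζ : Y → T.obj Y) (S : X → Y → Prop)
    (hdif : Difunctional S)
    (h1 : IsSim Λ ξ ζ S) (h2 : IsSim Λ ζ ξ (fun y x => S x y)) :
    IsTBisim T ξ ζ S := by
  classical
  let sd : Setoid (X ⊕ Y) := ⟨DifRel S, difRel_equiv hdif⟩
  let f : X → Quotient sd := fun x => Quotient.mk sd (.inl x)
  let g : Y → Quotient sd := fun y => Quotient.mk sd (.inr y)
  have key : ∀ x y, S x y ↔ f x = g y := by
    intro x y
    constructor
    · intro h; exact Quotient.sound h
    · intro h; exact Quotient.exact h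
  have step : ∀ x y, S x y → T.map (TypeCat.ofHom f) (ξ x) = T.map (TypeCat.ofHom g) (ζ y) := by
    intro x y hxy
    apply hsep
    intro L hL A
    have hfn := L.natural f A
    have hgn := L.natural g A
    constructor
    · intro h
      have hx : ξ x ∈ L.app X (f ⁻¹' A) := by rw [hfn]; exact h
      have hy := h1 x y hxy L hL (f ⁻¹' A) hx
      have hsub : RelImage S (f ⁻¹' A) ⊆ g ⁻¹' A := by
        rintro y' ⟨x', hx', hS⟩
        have : f x' = g y' := (key x' y').mp hS
        exact Set.mem_preimage.mpr (this ▸ hx')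
      have := L.mono Y hsub hy
      rw [hgn] at this; exact this
    · intro h
      have hy : ζ y ∈ L.app Y (g ⁻¹' A) := by rw [hgn]; exact h
      have hx := h2 y x hxy L hL (g ⁻¹' A) hy
      have hsub : RelImage (fun y x => S x y) (g ⁻¹' A) ⊆ f ⁻¹' A := by
        rintro x' ⟨y', hy', hS⟩
        have : f x' = g y' := (key x' y').mp hS
        exact Set.mem_preimage.mpr (this ▸ hy')
      have := L.mono X hsub hx
      rw [hfn] at this; exact this
  -- build the coalgebra structure on S
  let e : {p : X × Y // f p.1 = g p.2} → {p : X × Y // S p.1 p.2} :=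
    fun p => ⟨p.1, (key p.1.1 p.1.2).mpr p.2⟩
  refine ⟨fun s => T.map (TypeCat.ofHom e) (Classical.choose (hwp f g (ξ s.1.1) (ζ s.1.2)
    (step s.1.1 s.1.2 s.2))), ?_, ?_⟩
  · intro s
    obtain ⟨hu, _⟩ := Classical.choose_spec (hwp f g (ξ s.1.1) (ζ s.1.2)
      (step s.1.1 s.1.2 s.2))
    rw [← hu, ← FunctorToTypes.map_comp_apply]
    rfl
  · intro s
    obtain ⟨_, hv⟩ := Classical.choose_spec (hwp f g (ξ s.1.1) (ζ s.1.2)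
      (step s.1.1 s.1.2 s.2))
    rw [← hv, ← FunctorToTypes.map_comp_apply]
    rfl
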